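/- The classic unconstrained tree edit distance with node labels given by the scalar distance to the parent and cost c(ℓ₁,ℓ₂)=|ℓ₁−ℓ₂| is unstable under edge splits: for every constant C there exist two abstract merge trees T and T' differing by a minimal vertex perturbation of extent ε (an edge split) such that δ_G(T,T') > C·ε. In particular, for the pair of trees where T has root path values 0, x and leaves at heights 3x, 3x (with an extra saddle at 2x and leaf at 2x+ε) and T' has values 0, x with two leaves at 3x, any classic edit mapping leaves one node of label x unmatched, so δ_G(T,T') ≥ x. -/

import Mathlib

/-- An (unordered) node-labeled rooted tree; each node is labeled by the scalar distance
to its parent (the root by the blank label `0`). -/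
inductive LTree : Type where
  | node : ℝ → List LTree → LTree

namespace LTree

/-- One classic (unconstrained) edit operation with its cost: relabel a node, delete a
node (its children reattach to its parent, cost `|ℓ − 0|`), insert a node (inverse),
reorder children (cost 0, unordered trees), or operate deeper in the tree. -/
inductive GStep : LTree → LTree → ℝ → Prop
  | relabel (ℓ ℓ' : ℝ) (cs : List LTree) :
      GStep (.node ℓ cs) (.node ℓ' cs) |ℓ - ℓ'|
  | delete (ℓ ℓ' : ℝ) (cs' cs : List LTree) :
      GStep (.node ℓ (.node ℓ' cs' :: cs)) (.node ℓ (cs' ++ cs)) |ℓ'|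
  | insert (ℓ ℓ' : ℝ) (cs' cs : List LTree) :
      GStep (.node ℓ (cs' ++ cs)) (.node ℓ (.node ℓ' cs' :: cs)) |ℓ'|
  | perm (ℓ : ℝ) (cs cs' : List LTree) : cs.Perm cs' →
      GStep (.node ℓ cs) (.node ℓ cs') 0
  | congr (ℓ : ℝ) (t t' : LTree) (cs : List LTree) (c : ℝ) :
      GStep t t' c → GStep (.node ℓ (t :: cs)) (.node ℓ (t' :: cs)) c

/-- Edit sequences with their total cost. -/
inductive GSeq : LTree → LTree → ℝ → Prop
  | refl (t : LTree) : GSeq t t 0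
  | cons {t₁ t₂ t₃ : LTree} {c d : ℝ} :
      GStep t₁ t₂ c → GSeq t₂ t₃ d → GSeq t₁ t₃ (c + d)

/-- The classic unconstrained tree edit distance `δ_G`. -/
noncomputable def dG (t t' : LTree) : ℝ := sInf {c | GSeq t t' c}

end LTree

namespace LTree

/-- Potential function: sum over all nodes of `min |label| x`. -/
noncomputable def phi (x : ℝ) : LTree → ℝ
  | .node ℓ cs => min |ℓ| x + (cs.attach.map (fun c => phi x c.1)).sum
decreasing_by
  have := List.sizeOf_lt_of_mem c.2
  simp only [LTree.node.sizeOf_spec]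
  omega

lemma phi_node (x ℓ : ℝ) (cs : List LTree) :
    phi x (.node ℓ cs) = min |ℓ| x + (cs.map (phi x)).sum := by
  rw [phi]; congr 1; rw [List.map_attach_eq_pmap]; simp [List.pmap_eq_map]

lemma min_lip (a b c : ℝ) : |min a c - min b c| ≤ |a - b| := by
  rw [abs_sub_le_iff]
  constructor <;>
  · rcases le_total a c with h1 | h1 <;> rcases le_total b c with h2 | h2 <;>
      simp only [min_eq_left h1, min_eq_right h1, min_eq_left h2, min_eq_right h2] <;>
      linarith [le_abs_self (a - b), neg_abs_le (a - b)]

lemma phi_step {x : ℝ} (hx : 0 ≤ x) {t t' : LTree} {c : ℝ} (h : GStep t t' c) :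
    |phi x t - phi x t'| ≤ c := by
  induction h with
  | relabel ℓ ℓ' cs =>
      simp only [phi_node, add_sub_add_right_eq_sub]
      exact le_trans (min_lip _ _ _) (abs_abs_sub_abs_le_abs_sub ℓ ℓ')
  | delete ℓ ℓ' cs' cs =>
      simp only [phi_node, List.map_cons, List.map_append, List.sum_cons, List.sum_append]
      have h1 : (0:ℝ) ≤ min |ℓ'| x := le_min (abs_nonneg _) hx
      have h2 : min |ℓ'| x ≤ |ℓ'| := min_le_left _ _
      rw [show min |ℓ| x + (min |ℓ'| x + (cs'.map (phi x)).sum + (cs.map (phi x)).sum)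
          - (min |ℓ| x + ((cs'.map (phi x)).sum + (cs.map (phi x)).sum)) = min |ℓ'| x by ring,
        abs_of_nonneg h1]
      exact h2
  | insert ℓ ℓ' cs' cs =>
      simp only [phi_node, List.map_cons, List.map_append, List.sum_cons, List.sum_append]
      have h1 : (0:ℝ) ≤ min |ℓ'| x := le_min (abs_nonneg _) hx
      have h2 : min |ℓ'| x ≤ |ℓ'| := min_le_left _ _
      rw [show min |ℓ| x + ((cs'.map (phi x)).sum + (cs.map (phi x)).sum)
          - (min |ℓ| x + (min |ℓ'| x + (cs'.map (phi x)).sum + (cs.map (phi x)).sum))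
          = -(min |ℓ'| x) by ring, abs_neg, abs_of_nonneg h1]
      exact h2
  | perm ℓ cs cs' hp =>
      simp only [phi_node, (hp.map (phi x)).sum_eq, sub_self, abs_zero, le_refl]
  | congr ℓ t t' cs c _ ih =>
      simp only [phi_node, List.map_cons, List.sum_cons, add_sub_add_left_eq_sub,
        add_sub_add_right_eq_sub]
      exact ih

lemma phi_seq {x : ℝ} (hx : 0 ≤ x) {t t' : LTree} {c : ℝ} (h : GSeq t t' c) :
    |phi x t - phi x t'| ≤ c := by
  induction h with
  | refl t => simp
  | cons hs _ ih =>
      exact le_trans (abs_sub_le _ _ _) (add_le_add (phi_step hx hs) ih)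

end LTree

/-- The merge tree `T` of Figure 5 (left): root `A` at `0`, child `B` at `x` (label `x`),
`B`'s children `C` at `3x` (label `2x`) and saddle `E` at `2x` (label `x`); `E`'s
children `D` at `3x` (label `x`) and `F` at `2x+ε` (label `ε`). -/
noncomputable def splitLeft (x ε : ℝ) : LTree :=
  .node 0 [.node x [.node (2 * x) [], .node x [.node x [], .node ε []]]]

/-- The merge tree `T'` of Figure 5 (right): root `A` at `0`, child `B` at `x`
(label `x`) with two leaf children at `3x` (labels `2x`, `2x`). -/
noncomputable def splitRight (x : ℝ) : LTree :=
  .node 0 [.node x [.node (2 * x) [], .node (2 * x) []]]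

open LTree in
lemma gseq_exists (x ε : ℝ) : ∃ c, GSeq (splitLeft x ε) (splitRight x) c := by
  have s1 : GStep (splitLeft x ε)
      (.node 0 [.node x [.node x [.node x [], .node ε []], .node (2*x) []]]) 0 :=
    GStep.congr 0 _ _ [] 0 (GStep.perm x _ _ (List.Perm.swap _ _ _))
  have s2 : GStep (.node 0 [.node x [.node x [.node x [], .node ε []], .node (2*x) []]])
      (.node 0 [.node x [.node x [.node ε [], .node x []], .node (2*x) []]]) 0 :=
    GStep.congr 0 _ _ [] 0 (GStep.congr x _ _ [.node (2*x) []] 0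
      (GStep.perm x _ _ (List.Perm.swap _ _ _)))
  have s3 : GStep (.node 0 [.node x [.node x [.node ε [], .node x []], .node (2*x) []]])
      (.node 0 [.node x [.node x [.node x []], .node (2*x) []]]) |ε| :=
    GStep.congr 0 _ _ [] _ (GStep.congr x _ _ [.node (2*x) []] _
      (GStep.delete x ε [] [.node x []]))
  have s4 : GStep (.node 0 [.node x [.node x [.node x []], .node (2*x) []]])
      (.node 0 [.node x [.node x [], .node (2*x) []]]) |x| :=
    GStep.congr 0 _ _ [] _ (GStep.congr x _ _ [.node (2*x) []] _
      (GStep.delete x x [] []))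
  have s5 : GStep (.node 0 [.node x [.node x [], .node (2*x) []]])
      (splitRight x) |x - 2*x| :=
    GStep.congr 0 _ _ [] _ (GStep.congr x _ _ [.node (2*x) []] _
      (GStep.relabel x (2*x) []))
  exact ⟨_, .cons s1 (.cons s2 (.cons s3 (.cons s4 (.cons s5 (.refl _)))))⟩

open LTree in
lemma lower_bound (x ε : ℝ) (hx : 0 < x) (hε : 0 ≤ ε) (hεx : ε ≤ x) :
    x ≤ LTree.dG (splitLeft x ε) (splitRight x) := by
  have hne : {c | GSeq (splitLeft x ε) (splitRight x) c}.Nonempty := by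
    obtain ⟨c, hc⟩ := gseq_exists x ε
    exact ⟨c, hc⟩
  unfold LTree.dG
  refine le_csInf hne fun c hc => ?_
  have hseq : |phi x (splitLeft x ε) - phi x (splitRight x)| ≤ c := phi_seq hx.le hc
  have hL : phi x (splitLeft x ε) = 4 * x + ε := by
    simp only [splitLeft, phi_node, List.map_cons, List.map_nil, List.sum_cons, List.sum_nil]
    rw [abs_of_nonneg (le_refl (0:ℝ)), abs_of_nonneg hx.le, abs_of_nonneg hε,
      abs_of_nonneg (by linarith : (0:ℝ) ≤ 2 * x),
      min_eq_left hx.le, min_self x, min_eq_left hεx,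
      min_eq_right (by linarith : x ≤ 2 * x)]
    ring
  have hR : phi x (splitRight x) = 3 * x := by
    simp only [splitRight, phi_node, List.map_cons, List.map_nil, List.sum_cons, List.sum_nil]
    rw [abs_of_nonneg (le_refl (0:ℝ)), abs_of_nonneg hx.le,
      abs_of_nonneg (by linarith : (0:ℝ) ≤ 2 * x),
      min_eq_left hx.le, min_self x,
      min_eq_right (by linarith : x ≤ 2 * x)]
    ring
  rw [hL, hR] at hseq
  have : |4 * x + ε - 3 * x| = x + ε := by
    rw [abs_of_nonneg (by linarith)]; ring
  rw [this] at hseq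
  linarith

/-- the classic unconstrained edit distance `δ_G` is unstable under edge
splits: for every constant `C` there are merge trees differing by an edge split of
extent `ε` with `δ_G > C·ε`; in particular for the concrete pair of Figure 5 any classic
edit mapping leaves one node of label `x` unmatched, so `δ_G(T,T') ≥ x`. -/
theorem stmt_13 :
    (∀ C : ℝ, ∃ ε : ℝ, 0 < ε ∧ ∃ x : ℝ,
        C * ε < LTree.dG (splitLeft x ε) (splitRight x)) ∧
    (∀ x ε : ℝ, 0 < x → 0 ≤ ε → ε ≤ x →
        x ≤ LTree.dG (splitLeft x ε) (splitRight x)) := by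
  constructor
  · intro C
    refine ⟨1, one_pos, max C 0 + 1, ?_⟩
    have hx : (0:ℝ) < max C 0 + 1 := by positivity
    have h := lower_bound (max C 0 + 1) 1 hx zero_le_one
      (by have := le_max_right C 0; linarith)
    have : C * 1 < max C 0 + 1 := by
      have := le_max_left C 0
      simp only [mul_one]
      linarith
    linarith
  · exact lower_bound
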